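/- arXiv:0810.3670 — 2 statements merged into one kernel-verified Lean document; each statement's English description precedes it below -/
import Mathlib

section
/- Let Y' be the lazy walk with i.i.d. increments P(x=0)=1/2, P(x=±1)=1/4, and G = {Y'_k>0 for 0<k<n, Y'_n=0}. Then for any fixed δ>0 and any 1≤k≤n, P( max_{0≤s≤n^{2/3}} |Y'_{k+s} − Y'_k| > n^{1/3+δ} | G ) → 0 as n→∞. -/
open Finset

namespace LazyAux

/-- extend a `Fin L`-indexed sequence to `ℕ` by zero -/
def ext (L : ℕ) (a : Fin L → ℤ) (i : ℕ) : ℤ := if h : i < L then a ⟨i, h⟩ else 0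

lemma ext_lt {L : ℕ} (a : Fin L → ℤ) {i : ℕ} (h : i < L) : ext L a i = a ⟨i, h⟩ := dif_pos h

/-- partial sums -/
def psum (L : ℕ) (a : Fin L → ℤ) (j : ℕ) : ℤ := ∑ i ∈ Finset.range j, ext L a i

lemma psum_zero (L : ℕ) (a : Fin L → ℤ) : psum L a 0 = 0 := by simp [psum]

lemma psum_add (L : ℕ) (a : Fin L → ℤ) (j m : ℕ) :
    psum L a (j + m) = psum L a j + ∑ i ∈ Finset.range m, ext L a (j + i) := by
  simp [psum, Finset.sum_range_add]

/-- rotation -/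
def rotF (L : ℕ) (k : Fin L) (d : Fin L → ℤ) : Fin L → ℤ := fun i => d (i + k)

lemma rotF_injective (L : ℕ) (hL : 0 < L) (k : Fin L) : Function.Injective (rotF L k) := by
  haveI : NeZero L := NeZero.of_pos hL
  intro d d' h
  funext i
  have h2 := congrFun h (i - k)
  simp only [rotF] at h2
  have h3 : i - k + k = i := sub_add_cancel i k
  rwa [h3] at h2

lemma ext_rotF {L : ℕ} (k : Fin L) (d : Fin L → ℤ) {i : ℕ} (h : i < L) :
    ext L (rotF L k d) i = ext L d ((i + (k : ℕ)) % L) := by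
  have hL : 0 < L := lt_of_le_of_lt (Nat.zero_le _) h
  rw [ext_lt _ h, ext_lt _ (Nat.mod_lt _ hL)]
  have he : (⟨i, h⟩ : Fin L) + k = ⟨(i + (k : ℕ)) % L, Nat.mod_lt _ hL⟩ :=
    Fin.ext (by simp [Fin.val_add])
  simp only [rotF, he]

lemma psum_rotF_low {L : ℕ} (k : Fin L) (d : Fin L → ℤ) {j : ℕ}
    (hkj : (k : ℕ) + j ≤ L) :
    psum L (rotF L k d) j = psum L d ((k : ℕ) + j) - psum L d (k : ℕ) := by
  have hstep : psum L (rotF L k d) j = ∑ i ∈ Finset.range j, ext L d ((k : ℕ) + i) := by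
    apply Finset.sum_congr rfl
    intro i hi
    have hi' : i < j := Finset.mem_range.1 hi
    have hiL : i < L := by omega
    rw [ext_rotF k d hiL]
    congr 1
    rw [Nat.mod_eq_of_lt (by omega)]
    omega
  rw [hstep]
  have := psum_add L d (k : ℕ) j
  omega

lemma psum_rotF_high {L : ℕ} (k : Fin L) (d : Fin L → ℤ) {j : ℕ}
    (hjL : j ≤ L) (hkj : L < (k : ℕ) + j) :
    psum L (rotF L k d) j
      = psum L d L - psum L d (k : ℕ) + psum L d (j - (L - (k : ℕ))) := by
  have hk : (k : ℕ) < L := k.isLt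
  have hsplit : j = (L - (k : ℕ)) + (j - (L - (k : ℕ))) := by omega
  rw [show psum L (rotF L k d) j
      = psum L (rotF L k d) ((L - (k : ℕ)) + (j - (L - (k : ℕ)))) by rw [← hsplit]]
  rw [psum_add]
  have h1 : psum L (rotF L k d) (L - (k : ℕ)) = psum L d L - psum L d (k : ℕ) := by
    rw [psum_rotF_low k d (by omega)]
    congr 2
    omega
  rw [h1]
  congr 1
  unfold psum
  apply Finset.sum_congr rfl
  intro i hi
  have hi' : i < j - (L - (k : ℕ)) := Finset.mem_range.1 hi
  have hA : (L - (k : ℕ)) + i < L := by omega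
  rw [ext_rotF k d hA]
  congr 1
  rw [show L - (k : ℕ) + i + (k : ℕ) = L + i by omega, Nat.add_mod_left,
    Nat.mod_eq_of_lt (by omega)]

/-- the cycle lemma: some rotation of a sequence with total sum 1 has all
partial sums at least 1. -/
lemma cycle_lemma {L : ℕ} (hL : 0 < L) (d : Fin L → ℤ) (hsum : psum L d L = 1) :
    ∃ k : Fin L, ∀ j, 0 < j → j ≤ L → 1 ≤ psum L (rotF L k d) j := by
  classical
  obtain ⟨k₀, hk₀mem, hk₀min⟩ :=
    Finset.exists_min_image (Finset.range L) (psum L d) ⟨0, Finset.mem_range.2 hL⟩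
  set S := (Finset.range L).filter (fun j => ∀ i ∈ Finset.range L, psum L d j ≤ psum L d i)
    with hS
  have hSne : S.Nonempty := ⟨k₀, by
    simp only [hS, Finset.mem_filter]; exact ⟨hk₀mem, hk₀min⟩⟩
  set k := S.max' hSne with hk
  have hkmem : k ∈ S := S.max'_mem hSne
  have hkL : k < L := Finset.mem_range.1 (Finset.mem_filter.1 hkmem).1
  have hkmin : ∀ i ∈ Finset.range L, psum L d k ≤ psum L d i := (Finset.mem_filter.1 hkmem).2
  have hlast : ∀ l, k < l → l < L → psum L d k < psum L d l := by
    intro l hkl hlL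
    by_contra h
    push_neg at h
    have hlS : l ∈ S := by
      rw [hS, Finset.mem_filter]
      exact ⟨Finset.mem_range.2 hlL, fun i hi => le_trans h (hkmin i hi)⟩
    exact absurd (S.le_max' l hlS) (not_le.2 hkl)
  have hTk0 : psum L d k ≤ 0 := by
    have := hkmin 0 (Finset.mem_range.2 hL)
    simpa [psum_zero] using this
  refine ⟨⟨k, hkL⟩, ?_⟩
  have hval : ((⟨k, hkL⟩ : Fin L) : ℕ) = k := rfl
  intro j hj hjL
  by_cases hcase : k + j ≤ L
  · rw [psum_rotF_low ⟨k, hkL⟩ d (by rw [hval]; exact hcase), hval]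
    rcases eq_or_lt_of_le hcase with heq | hlt
    · rw [heq, hsum]
      omega
    · have := hlast (k + j) (by omega) hlt
      omega
  · rw [psum_rotF_high ⟨k, hkL⟩ d hjL (by rw [hval]; omega), hval, hsum]
    have hmem : j - (L - k) ∈ Finset.range L := Finset.mem_range.2 (by omega)
    have := hkmin _ hmem
    omega




lemma psum_univ (L : ℕ) (d : Fin L → ℤ) : psum L d L = ∑ i : Fin L, d i := by
  rw [psum, Finset.sum_range]
  apply Finset.sum_congr rfl
  intro i _
  rw [ext_lt _ i.isLt]

/-- sequences with entries `±1` and total sum `1` -/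
def NseqF (L : ℕ) : Finset (Fin L → ℤ) :=
  (Fintype.piFinset fun _ => ({1, -1} : Finset ℤ)).filter (fun d => psum L d L = 1)

lemma choose_le_card_NseqF {n : ℕ} (hn : 1 ≤ n) :
    (2*n-1).choose n ≤ (NseqF (2*n-1)).card := by
  classical
  set L := 2*n-1 with hLdef
  have hcard : (Finset.powersetCard n (Finset.univ : Finset (Fin L))).card = (2*n-1).choose n := by
    simp [Finset.card_powersetCard, hLdef]
  rw [← hcard]
  apply Finset.card_le_card_of_injOn
    (fun s : Finset (Fin L) => (fun i => if i ∈ s then (1:ℤ) else -1))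
  · intro s hs
    rw [Finset.mem_coe, Finset.mem_powersetCard] at hs
    rw [Finset.mem_coe, NseqF, Finset.mem_filter]
    constructor
    · rw [Fintype.mem_piFinset]
      intro i
      by_cases h : i ∈ s <;> simp [h]
    · rw [psum_univ, ← Finset.sum_add_sum_compl s]
      rw [Finset.sum_congr rfl (fun i hi => if_pos hi),
        Finset.sum_congr rfl (fun (i : Fin L) (hi : i ∈ sᶜ) => if_neg (Finset.mem_compl.1 hi))]
      rw [Finset.sum_const, Finset.sum_const, Finset.card_compl, hs.2]
      simp only [nsmul_eq_mul, mul_one, mul_neg, Fintype.card_fin]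
      have : L - n = n - 1 := by omega
      rw [this]
      push_cast [Nat.cast_sub hn]
      ring
  · intro s _ s' _ h
    ext i
    have h2 := congrFun h i
    by_cases h1 : i ∈ s <;> by_cases h1' : i ∈ s' <;> simp [h1, h1'] at h2 ⊢ <;> norm_num at h2

/-- pair sequences -/
def PairF (n : ℕ) : Finset (Fin n → ℤ × ℤ) :=
  Fintype.piFinset fun _ => ({1, -1} : Finset ℤ) ×ˢ ({1, -1} : Finset ℤ)

def flat (n : ℕ) (c : Fin n → ℤ × ℤ) (j : ℕ) : ℤ :=
  if h : j / 2 < n then (if j % 2 = 0 then (c ⟨j/2, h⟩).1 else (c ⟨j/2, h⟩).2) else 0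

def fsum (n : ℕ) (c : Fin n → ℤ × ℤ) (l : ℕ) : ℤ := ∑ j ∈ Finset.range l, flat n c j

def DClass (n : ℕ) : Finset (Fin n → ℤ × ℤ) :=
  (PairF n).filter (fun c => (∀ l < 2*n, 0 < l → 0 < fsum n c l) ∧ fsum n c (2*n) = 0)

def compressF {n : ℕ} (c : Fin n → ℤ × ℤ) : Fin n → ℤ :=
  fun i => if (c i).1 = (c i).2 then (c i).1 else 0

def ExcF (n : ℕ) : Finset (Fin n → ℤ) :=
  (Fintype.piFinset fun _ => ({-1, 0, 1} : Finset ℤ)).filter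
    (fun a => (∀ j < n, 0 < j → 0 < psum n a j) ∧ psum n a n = 0)

lemma pair_sum_eq {c : ℤ × ℤ} (h1 : c.1 = 1 ∨ c.1 = -1) (h2 : c.2 = 1 ∨ c.2 = -1) :
    c.1 + c.2 = 2 * (if c.1 = c.2 then c.1 else 0) := by
  rcases h1 with h | h <;> rcases h2 with h' | h' <;> rw [h, h'] <;> norm_num

lemma mem_PairF_iff {n : ℕ} {c : Fin n → ℤ × ℤ} :
    c ∈ PairF n ↔ ∀ i, ((c i).1 = 1 ∨ (c i).1 = -1) ∧ ((c i).2 = 1 ∨ (c i).2 = -1) := by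
  rw [PairF, Fintype.mem_piFinset]
  apply forall_congr'
  intro i
  rw [Finset.mem_product]
  simp

lemma fsum_two_mul {n : ℕ} {c : Fin n → ℤ × ℤ} (hc : c ∈ PairF n) :
    ∀ {j : ℕ}, j ≤ n → fsum n c (2*j) = 2 * psum n (compressF c) j := by
  intro j
  induction j with
  | zero => intro _; simp [fsum, psum]
  | succ m ih =>
    intro hm
    have hmn : m < n := by omega
    have h2m : 2*(m+1) = (2*m) + 1 + 1 := by ring
    rw [h2m, fsum, Finset.sum_range_succ, Finset.sum_range_succ, ← fsum]
    have hps : psum n (compressF c) (m+1) = psum n (compressF c) m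
        + (if (c ⟨m, hmn⟩).1 = (c ⟨m, hmn⟩).2 then (c ⟨m, hmn⟩).1 else 0) := by
      rw [psum, Finset.sum_range_succ, ← psum, ext_lt _ hmn]
      rfl
    rw [ih (by omega), hps]
    have hfe : flat n c (2*m) = (c ⟨m, hmn⟩).1 := by
      have hlt : (2*m)/2 < n := by omega
      have hidx : (⟨(2*m)/2, hlt⟩ : Fin n) = ⟨m, hmn⟩ := Fin.mk_eq_mk.mpr (by omega)
      rw [flat, dif_pos hlt, if_pos (by omega), hidx]
    have hfo : flat n c (2*m+1) = (c ⟨m, hmn⟩).2 := by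
      have hlt : (2*m+1)/2 < n := by omega
      have hidx : (⟨(2*m+1)/2, hlt⟩ : Fin n) = ⟨m, hmn⟩ := Fin.mk_eq_mk.mpr (by omega)
      rw [flat, dif_pos hlt, if_neg (by omega), hidx]
    rw [hfe, hfo]
    have := pair_sum_eq (mem_PairF_iff.1 hc ⟨m, hmn⟩).1 (mem_PairF_iff.1 hc ⟨m, hmn⟩).2
    omega

lemma compress_mem {n : ℕ} {c : Fin n → ℤ × ℤ} (hc : c ∈ DClass n) :
    compressF c ∈ ExcF n := by
  rw [DClass, Finset.mem_filter] at hc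
  obtain ⟨hcP, hpos, htot⟩ := hc
  rw [ExcF, Finset.mem_filter]
  refine ⟨?_, ?_, ?_⟩
  · rw [Fintype.mem_piFinset]
    intro i
    obtain ⟨h1, h2⟩ := mem_PairF_iff.1 hcP i
    rcases h1 with h | h <;> rcases h2 with h' | h' <;> simp [compressF, h, h']
  · intro j hj hj0
    have := hpos (2*j) (by omega) (by omega)
    rw [fsum_two_mul hcP (by omega)] at this
    omega
  · have := htot
    rw [fsum_two_mul hcP (le_refl n)] at this
    omega

lemma fiber_card_le {n : ℕ} (a : Fin n → ℤ) :
    ((DClass n).filter (fun c => compressF c = a)).card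
      ≤ ∏ i : Fin n, (if a i = 0 then 2 else 1) := by
  classical
  have hsub : (DClass n).filter (fun c => compressF c = a)
      ⊆ Fintype.piFinset (fun i =>
          if a i = 0 then ({(1,-1),(-1,1)} : Finset (ℤ×ℤ)) else {(a i, a i)}) := by
    intro c hc
    rw [Finset.mem_filter] at hc
    obtain ⟨hcD, hca⟩ := hc
    have hcP : c ∈ PairF n := (Finset.mem_filter.1 hcD).1
    rw [Fintype.mem_piFinset]
    intro i
    obtain ⟨h1, h2⟩ := mem_PairF_iff.1 hcP i
    have hai : (if (c i).1 = (c i).2 then (c i).1 else 0) = a i := congrFun hca i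
    rcases h1 with h | h <;> rcases h2 with h' | h' <;>
      · rw [h, h'] at hai
        norm_num at hai
        rw [← hai]
        simp [Prod.ext_iff, h, h']
  calc ((DClass n).filter (fun c => compressF c = a)).card
      ≤ (Fintype.piFinset (fun i =>
          if a i = 0 then ({(1,-1),(-1,1)} : Finset (ℤ×ℤ)) else {(a i, a i)})).card :=
        Finset.card_le_card hsub
    _ = ∏ i : Fin n, (if a i = 0 then ({(1,-1),(-1,1)} : Finset (ℤ×ℤ)) else {(a i, a i)}).card :=
        Fintype.card_piFinset _
    _ = ∏ i : Fin n, (if a i = 0 then 2 else 1) := by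
        apply Finset.prod_congr rfl
        intro i _
        split <;> simp

lemma card_DClass_le {n : ℕ} :
    (DClass n).card ≤ ∑ a ∈ ExcF n, ∏ i : Fin n, (if a i = 0 then 2 else 1) := by
  classical
  rw [Finset.card_eq_sum_card_fiberwise (fun c hc => compress_mem hc)]
  exact Finset.sum_le_sum fun a _ => fiber_card_le a




def pairUp (n : ℕ) (e : Fin (2*n-1) → ℤ) : Fin n → ℤ × ℤ :=
  fun i => (ext (2*n-1) e (2*(i:ℕ)),
    if h : 2*(i:ℕ)+1 < 2*n-1 then e ⟨2*(i:ℕ)+1, h⟩ else -1)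

lemma flat_pairUp {n : ℕ} (hn : 1 ≤ n) (e : Fin (2*n-1) → ℤ) {j : ℕ} (hj : j < 2*n) :
    flat n (pairUp n e) j = if h : j < 2*n-1 then e ⟨j, h⟩ else -1 := by
  have hlt : j / 2 < n := by omega
  rw [flat, dif_pos hlt]
  rcases Nat.even_or_odd j with he | ho
  · obtain ⟨m, hm⟩ := he
    have hjL : j < 2*n-1 := by omega
    rw [if_pos (by omega), dif_pos hjL]
    show (pairUp n e ⟨j/2, hlt⟩).1 = e ⟨j, hjL⟩
    rw [pairUp]
    dsimp only
    rw [ext_lt _ (show 2*((⟨j/2, hlt⟩ : Fin n) : ℕ) < 2*n-1 by simp only [Fin.val_mk]; omega)]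
    congr 1
    exact Fin.mk_eq_mk.mpr (by show 2*(j/2) = j; omega)
  · obtain ⟨m, hm⟩ := ho
    rw [if_neg (by omega)]
    show (pairUp n e ⟨j/2, hlt⟩).2 = _
    rw [pairUp]
    dsimp only
    by_cases hjL : j < 2*n-1
    · rw [dif_pos (show 2*((⟨j/2, hlt⟩ : Fin n) : ℕ)+1 < 2*n-1 by
        simp only [Fin.val_mk]; omega), dif_pos hjL]
      congr 1
      exact Fin.mk_eq_mk.mpr (by show 2*(j/2)+1 = j; omega)
    · rw [dif_neg (show ¬(2*((⟨j/2, hlt⟩ : Fin n) : ℕ)+1 < 2*n-1) by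
        simp only [Fin.val_mk]; omega), dif_neg hjL]

lemma fsum_pairUp_low {n : ℕ} (hn : 1 ≤ n) (e : Fin (2*n-1) → ℤ) {l : ℕ} (hl : l ≤ 2*n-1) :
    fsum n (pairUp n e) l = psum (2*n-1) e l := by
  unfold fsum psum
  apply Finset.sum_congr rfl
  intro j hj
  have hj' : j < 2*n-1 := by have := Finset.mem_range.1 hj; omega
  rw [flat_pairUp hn e (show j < 2*n by omega), dif_pos hj', ext_lt _ hj']

lemma fsum_pairUp_top {n : ℕ} (hn : 1 ≤ n) (e : Fin (2*n-1) → ℤ) :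
    fsum n (pairUp n e) (2*n) = psum (2*n-1) e (2*n-1) - 1 := by
  have h2n : fsum n (pairUp n e) (2*n) = fsum n (pairUp n e) ((2*n-1) + 1) := by
    rw [show (2*n-1)+1 = 2*n by omega]
  rw [h2n, fsum, Finset.sum_range_succ, ← fsum, fsum_pairUp_low hn e (le_refl _)]
  rw [flat_pairUp hn e (show 2*n-1 < 2*n by omega), dif_neg (by omega)]
  ring

lemma pairUp_mem_DClass {n : ℕ} (hn : 1 ≤ n) (e : Fin (2*n-1) → ℤ)
    (he : ∀ i, e i = 1 ∨ e i = -1)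
    (hsum : psum (2*n-1) e (2*n-1) = 1)
    (hpos : ∀ j, 0 < j → j ≤ 2*n-1 → 1 ≤ psum (2*n-1) e j) :
    pairUp n e ∈ DClass n := by
  rw [DClass, Finset.mem_filter]
  refine ⟨?_, ?_, ?_⟩
  · rw [mem_PairF_iff]
    intro i
    constructor
    · rw [pairUp]
      dsimp only
      rw [ext_lt _ (show 2*(i:ℕ) < 2*n-1 by have := i.isLt; omega)]
      exact he _
    · rw [pairUp]
      dsimp only
      split
      · exact he _
      · right; rfl
  · intro l hl2n hl0
    rw [fsum_pairUp_low hn e (by omega)]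
    have := hpos l hl0 (by omega)
    omega
  · rw [fsum_pairUp_top hn e, hsum]
    ring

lemma pairUp_injective {n : ℕ} (hn : 1 ≤ n) : Function.Injective (pairUp n) := by
  intro e e' h
  funext j
  have hj : (j:ℕ) < 2*n := by have := j.isLt; omega
  have h1 : e j = flat n (pairUp n e) (j:ℕ) := by
    rw [flat_pairUp hn e hj, dif_pos j.isLt]
  have h2 : e' j = flat n (pairUp n e') (j:ℕ) := by
    rw [flat_pairUp hn e' hj, dif_pos j.isLt]
  rw [h1, h2, h]

lemma card_NseqF_le {n : ℕ} (hn : 1 ≤ n) :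
    (NseqF (2*n-1)).card ≤ (2*n-1) * (DClass n).card := by
  classical
  have hL0 : 0 < 2*n-1 := by omega
  have hmain : ∀ d : Fin (2*n-1) → ℤ, d ∈ NseqF (2*n-1) →
      ∃ k : Fin (2*n-1), ∀ j, 0 < j → j ≤ 2*n-1 → 1 ≤ psum (2*n-1) (rotF (2*n-1) k d) j := by
    intro d hd
    exact cycle_lemma hL0 d (Finset.mem_filter.1 hd).2
  haveI : Nonempty (Fin (2*n-1)) := ⟨⟨0, hL0⟩⟩
  choose! kf hkf using hmain
  have hcard := Finset.card_le_card_of_injOn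
    (fun d => ((kf d, pairUp n (rotF (2*n-1) (kf d) d)) : Fin (2*n-1) × (Fin n → ℤ × ℤ)))
    (s := NseqF (2*n-1)) (t := Finset.univ ×ˢ DClass n) ?_ ?_
  · rw [Finset.card_product, Finset.card_univ, Fintype.card_fin] at hcard
    exact hcard
  · intro d hd
    rw [Finset.mem_coe] at hd
    rw [Finset.mem_coe, Finset.mem_product]
    refine ⟨Finset.mem_univ _, ?_⟩
    have hdpi : ∀ i, d i = 1 ∨ d i = -1 := by
      have := (Finset.mem_filter.1 hd).1
      rw [Fintype.mem_piFinset] at this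
      intro i
      have h2 := this i
      simpa using h2
    apply pairUp_mem_DClass hn
    · intro i
      exact hdpi _
    · rw [psum_univ]
      have heq : ∑ i : Fin (2*n-1), rotF (2*n-1) (kf d) d i = ∑ i : Fin (2*n-1), d i := by
        haveI : NeZero (2*n-1) := NeZero.of_pos hL0
        exact Fintype.sum_equiv (Equiv.addRight (kf d)) _ _ (fun i => rfl)
      rw [heq, ← psum_univ]
      exact (Finset.mem_filter.1 hd).2
    · exact hkf d hd
  · intro d hd d' hd' h
    rw [Prod.mk.injEq] at h
    obtain ⟨h1, h2⟩ := h
    rw [← h1] at h2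
    have hrot := pairUp_injective hn h2
    exact rotF_injective (2*n-1) hL0 (kf d) hrot

lemma centralBinom_eq_two_mul {n : ℕ} (hn : 1 ≤ n) :
    Nat.centralBinom n = 2 * (2*n-1).choose n := by
  obtain ⟨m, rfl⟩ : ∃ m, n = m + 1 := ⟨n - 1, by omega⟩
  rw [Nat.centralBinom, show 2*(m+1) = (2*m+1)+1 by ring, Nat.choose_succ_succ]
  have hsymm : (2*m+1).choose m = (2*m+1).choose (m+1) := by
    have := Nat.choose_symm (show m+1 ≤ 2*m+1 by omega)
    rw [show 2*m+1-(m+1) = m by omega] at this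
    exact this
  rw [hsymm, show 2*m+1+1-1 = 2*m+1 by omega, Nat.succ_eq_add_one]
  ring

lemma hfac_lemma {n : ℕ} (hn : 1 ≤ n) : ((2*n+1) * (2 * (2*n-1))) ≤ 8*n^2 := by
  obtain ⟨m, rfl⟩ : ∃ m, n = m+1 := ⟨n-1, by omega⟩
  rw [show 2*(m+1)-1 = 2*m+1 by omega]
  nlinarith

/-- the key counting inequality -/
lemma key_count {n : ℕ} (hn : 1 ≤ n) :
    4^n ≤ 8 * n^2 * ∑ a ∈ ExcF n, ∏ i : Fin n, (if a i = 0 then 2 else 1) := by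
  have h1 : 4^n ≤ (2*n+1) * Nat.centralBinom n :=
    Nat.four_pow_le_two_mul_add_one_mul_central_binom n
  have h2 : Nat.centralBinom n ≤ 2 * ((2*n-1) * (DClass n).card) := by
    rw [centralBinom_eq_two_mul hn]
    exact mul_le_mul_right (le_trans (choose_le_card_NseqF hn) (card_NseqF_le hn)) 2
  have h3 : (DClass n).card ≤ ∑ a ∈ ExcF n, ∏ i : Fin n, (if a i = 0 then 2 else 1) :=
    card_DClass_le
  have hfac : ((2*n+1) * (2 * (2*n-1))) ≤ 8*n^2 := hfac_lemma hn
  calc 4^n ≤ (2*n+1) * Nat.centralBinom n := h1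
    _ ≤ (2*n+1) * (2 * ((2*n-1) * (DClass n).card)) := mul_le_mul_right h2 _
    _ = ((2*n+1) * (2 * (2*n-1))) * (DClass n).card := by ring
    _ ≤ (8*n^2) * (DClass n).card := mul_le_mul_left hfac _
    _ ≤ 8 * n^2 * ∑ a ∈ ExcF n, ∏ i : Fin n, (if a i = 0 then 2 else 1) :=
        mul_le_mul_right h3 _




open MeasureTheory ProbabilityTheory
open scoped ENNReal

section MeasurePart

variable {Ω : Type*} [MeasurableSpace Ω] (μ : Measure Ω) [IsProbabilityMeasure μ]
  (x : ℕ → Ω → ℤ)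

/-- cylinder set -/
def cylSet (n : ℕ) (a : Fin n → ℤ) : Set Ω := ⋂ i ∈ Finset.range n, x i ⁻¹' {ext n a i}

/-- the excursion event -/
def Gset (n : ℕ) : Set Ω :=
  {ω | (∀ j, 0 < j → j < n → 0 < ∑ i ∈ Finset.range j, x i ω) ∧
    ∑ i ∈ Finset.range n, x i ω = 0}

lemma cylSet_measurableSet (hmeas : ∀ i, Measurable (x i)) (n : ℕ) (a : Fin n → ℤ) :
    MeasurableSet (cylSet x n a) :=
  MeasurableSet.biInter (Finset.range n).countable_toSet
    (fun i _ => (hmeas i) (measurableSet_singleton _))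

lemma mem_cylSet_iff {n : ℕ} {a : Fin n → ℤ} {ω : Ω} :
    ω ∈ cylSet x n a ↔ ∀ i < n, x i ω = ext n a i := by
  simp [cylSet]

lemma cylSet_sum {n : ℕ} {a : Fin n → ℤ} {ω : Ω} (hω : ω ∈ cylSet x n a)
    {j : ℕ} (hj : j ≤ n) :
    ∑ i ∈ Finset.range j, x i ω = psum n a j := by
  apply Finset.sum_congr rfl
  intro i hi
  exact (mem_cylSet_iff x).1 hω i (by have := Finset.mem_range.1 hi; omega)

lemma cylSet_subset_G {n : ℕ} {a : Fin n → ℤ} (ha : a ∈ ExcF n) :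
    cylSet x n a ⊆ Gset x n := by
  intro ω hω
  rw [ExcF, Finset.mem_filter] at ha
  obtain ⟨-, hpos, htot⟩ := ha
  constructor
  · intro j hj0 hjn
    rw [cylSet_sum x hω (le_of_lt hjn)]
    exact hpos j hjn hj0
  · rw [cylSet_sum x hω (le_refl n)]
    exact htot

lemma cylSet_disjoint {n : ℕ} {a b : Fin n → ℤ} (hab : a ≠ b) :
    Disjoint (cylSet x n a) (cylSet x n b) := by
  rw [Set.disjoint_left]
  intro ω hωa hωb
  apply hab
  funext i
  have h1 := (mem_cylSet_iff x).1 hωa i i.isLt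
  have h2 := (mem_cylSet_iff x).1 hωb i i.isLt
  rw [ext_lt _ i.isLt] at h1 h2
  rw [Fin.eta] at h1 h2
  rw [← h1, ← h2]

variable (hmeas : ∀ i, Measurable (x i))
  (hindep : iIndepFun x μ)
  (h0 : ∀ i, μ {ω | x i ω = 0} = 1 / 2)
  (h1 : ∀ i, μ {ω | x i ω = 1} = 1 / 4)
  (hm1 : ∀ i, μ {ω | x i ω = -1} = 1 / 4)

include hmeas hindep h0 h1 hm1

lemma meas_atom (i : ℕ) {v : ℤ} (hv : v = -1 ∨ v = 0 ∨ v = 1) :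
    μ (x i ⁻¹' {v}) = 4⁻¹ * (if v = 0 then 2 else 1) := by
  have hpre : x i ⁻¹' {v} = {ω | x i ω = v} := rfl
  rcases hv with rfl | rfl | rfl
  · rw [hpre, hm1 i, if_neg (by norm_num), mul_one, one_div]
  · rw [hpre, h0 i, if_pos rfl]
    rw [show (4:ℝ≥0∞) = 2*2 by norm_num, ENNReal.mul_inv (by norm_num) (by norm_num)]
    rw [one_div, mul_assoc, ENNReal.inv_mul_cancel (by norm_num) (by norm_num), mul_one]
  · rw [hpre, h1 i, if_neg (by norm_num), mul_one, one_div]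

lemma cylSet_meas_val {n : ℕ} {a : Fin n → ℤ}
    (ha : ∀ i : Fin n, a i = -1 ∨ a i = 0 ∨ a i = 1) :
    μ (cylSet x n a)
      = 4⁻¹^n * ((∏ i : Fin n, (if a i = 0 then 2 else 1) : ℕ) : ℝ≥0∞) := by
  have hprodmeas : μ (cylSet x n a) = ∏ i ∈ Finset.range n, μ (x i ⁻¹' {ext n a i}) :=
    hindep.measure_inter_preimage_eq_mul (Finset.range n)
      (fun _ _ => measurableSet_singleton _)
  rw [hprodmeas]
  have hterm : ∀ i ∈ Finset.range n,
      μ (x i ⁻¹' {ext n a i}) = 4⁻¹ * (if ext n a i = 0 then 2 else 1) := by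
    intro i hi
    have hilt : i < n := Finset.mem_range.1 hi
    apply meas_atom μ x hmeas hindep h0 h1 hm1
    rw [ext_lt _ hilt]
    exact ha _
  rw [Finset.prod_congr rfl hterm, Finset.prod_mul_distrib, Finset.prod_const,
    Finset.card_range]
  congr 1
  rw [Nat.cast_prod, Finset.prod_range (fun i => (if ext n a i = 0 then (2:ℝ≥0∞) else 1))]
  apply Finset.prod_congr rfl
  intro i _
  rw [ext_lt _ i.isLt, Fin.eta]
  split <;> norm_num

/-- the lower bound on the excursion probability -/
lemma G_lower {n : ℕ} (hn : 1 ≤ n) :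
    ((8:ℝ≥0∞) * n^2)⁻¹ ≤ μ (Gset x n) := by
  classical
  have hsub : (⋃ a ∈ ExcF n, cylSet x n a) ⊆ Gset x n :=
    Set.iUnion₂_subset (fun a ha => cylSet_subset_G x ha)
  have hmeasle : ∑ a ∈ ExcF n, μ (cylSet x n a) ≤ μ (Gset x n) := by
    rw [← MeasureTheory.measure_biUnion_finset
      (fun a _ b _ hab => cylSet_disjoint x hab)
      (fun a _ => cylSet_measurableSet x hmeas n a)]
    exact measure_mono hsub
  have hval : ∀ a ∈ ExcF n, μ (cylSet x n a)
      = 4⁻¹^n * ((∏ i : Fin n, (if a i = 0 then 2 else 1) : ℕ) : ℝ≥0∞) := by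
    intro a ha
    apply cylSet_meas_val μ x hmeas hindep h0 h1 hm1
    intro i
    have hpi := (Finset.mem_filter.1 ha).1
    rw [Fintype.mem_piFinset] at hpi
    have h2 := hpi i
    simp at h2
    tauto
  rw [Finset.sum_congr rfl hval, ← Finset.mul_sum, ← Nat.cast_sum] at hmeasle
  refine le_trans ?_ hmeasle
  have hkey := key_count hn
  have hcast : (4:ℝ≥0∞)^n
      ≤ ((∑ a ∈ ExcF n, ∏ i : Fin n, (if a i = 0 then 2 else 1) : ℕ) : ℝ≥0∞)
        * (8*(n:ℝ≥0∞)^2) := by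
    calc (4:ℝ≥0∞)^n = (((4:ℕ)^n : ℕ) : ℝ≥0∞) := by push_cast; ring
      _ ≤ ((8*n^2* ∑ a ∈ ExcF n, ∏ i : Fin n, (if a i = 0 then 2 else 1) : ℕ) : ℝ≥0∞) :=
          Nat.cast_le.2 hkey
      _ = ((∑ a ∈ ExcF n, ∏ i : Fin n, (if a i = 0 then 2 else 1) : ℕ) : ℝ≥0∞)
          * (8*(n:ℝ≥0∞)^2) := by
        rw [Nat.cast_mul, Nat.cast_mul, Nat.cast_pow]
        push_cast
        ring
  have hdiv := ENNReal.div_le_of_le_mul hcast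
  calc ((8:ℝ≥0∞)*(n:ℝ≥0∞)^2)⁻¹
      = 4⁻¹^n * ((4:ℝ≥0∞)^n / (8*(n:ℝ≥0∞)^2)) := by
        rw [← ENNReal.inv_pow, ← mul_div_assoc,
          ENNReal.inv_mul_cancel (by positivity) (by simp), one_div]
    _ ≤ 4⁻¹^n * ((∑ a ∈ ExcF n, ∏ i : Fin n, (if a i = 0 then 2 else 1) : ℕ) : ℝ≥0∞) :=
        mul_le_mul_right hdiv _

end MeasurePart




open MeasureTheory ProbabilityTheory Real
open scoped ENNReal

lemma ennreal_quarter_add : (4:ℝ≥0∞)⁻¹ + 4⁻¹ = 2⁻¹ := by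
  rw [show (4:ℝ≥0∞) = 2*2 by norm_num, ENNReal.mul_inv (by norm_num) (by norm_num), ← mul_add,
    ENNReal.inv_two_add_inv_two, mul_one]

lemma ennreal_atoms_sum : (1/4 : ℝ≥0∞) + (1/2 + 1/4) = 1 := by
  rw [show (1/4 : ℝ≥0∞) + (1/2 + 1/4) = (1/4 + 1/4) + 1/2 by ring, one_div, one_div,
    ennreal_quarter_add, ENNReal.inv_two_add_inv_two]

section ChernoffPart

variable {Ω : Type*} [MeasurableSpace Ω] (μ : Measure Ω) [IsProbabilityMeasure μ]
  (x : ℕ → Ω → ℤ)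
  (hmeas : ∀ i, Measurable (x i))
  (hindep : iIndepFun x μ)
  (h0 : ∀ i, μ {ω | x i ω = 0} = 1 / 2)
  (h1 : ∀ i, μ {ω | x i ω = 1} = 1 / 4)
  (hm1 : ∀ i, μ {ω | x i ω = -1} = 1 / 4)

include hmeas h0 h1 hm1

lemma ae_vals (i : ℕ) : ∀ᵐ ω ∂μ, x i ω = -1 ∨ x i ω = 0 ∨ x i ω = 1 := by
  have hm : ∀ v : ℤ, MeasurableSet {ω : Ω | x i ω = v} :=
    fun v => hmeas i (measurableSet_singleton v)
  have hdisj : ∀ v w : ℤ, v ≠ w → Disjoint {ω : Ω | x i ω = v} {ω : Ω | x i ω = w} :=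
    fun v w hvw => Set.disjoint_left.2 (fun ω hv hw => hvw (by
      rw [Set.mem_setOf_eq] at hv hw
      rw [← hv, ← hw]))
  have hu : μ ({ω : Ω | x i ω = -1} ∪ ({ω | x i ω = 0} ∪ {ω | x i ω = 1})) = 1 := by
    rw [measure_union (Disjoint.union_right (hdisj _ _ (by norm_num)) (hdisj _ _ (by norm_num)))
      ((hm 0).union (hm 1)),
      measure_union (hdisj _ _ (by norm_num)) (hm 1), h0 i, h1 i, hm1 i]
    exact ennreal_atoms_sum
  have hc : μ ({ω : Ω | x i ω = -1} ∪ ({ω | x i ω = 0} ∪ {ω | x i ω = 1}))ᶜ = 0 :=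
    (prob_compl_eq_zero_iff ((hm (-1)).union ((hm 0).union (hm 1)))).2 hu
  have hae : ∀ᵐ ω ∂μ, ω ∈ ({ω : Ω | x i ω = -1} ∪ ({ω | x i ω = 0} ∪ {ω | x i ω = 1})) :=
    MeasureTheory.mem_ae_iff.2 hc
  filter_upwards [hae] with ω hω
  simpa [Set.mem_union, Set.mem_setOf_eq] using hω

/-- the moment generating function bound for a single step -/
lemma mgf_single_le (i : ℕ) (lam : ℝ) :
    mgf (fun ω => ((x i ω : ℤ) : ℝ)) μ lam ≤ exp (lam^2/2) := by
  classical
  set A1 := {ω : Ω | x i ω = 1} with hA1def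
  set Am := {ω : Ω | x i ω = -1} with hAmdef
  have hA1 : MeasurableSet A1 := hmeas i (measurableSet_singleton 1)
  have hAm : MeasurableSet Am := hmeas i (measurableSet_singleton (-1))
  have hdisj : Disjoint A1 Am := Set.disjoint_left.2 (fun ω hv hw => by
    rw [hA1def, Set.mem_setOf_eq] at hv
    rw [hAmdef, Set.mem_setOf_eq] at hw
    rw [hv] at hw
    norm_num at hw)
  have hcongr : (fun ω => exp (lam * ((x i ω : ℤ):ℝ)))
      =ᵐ[μ] (fun ω => Set.indicator A1 (fun _ => exp lam) ω
        + Set.indicator Am (fun _ => exp (-lam)) ω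
        + Set.indicator ((A1 ∪ Am)ᶜ) (fun _ => (1:ℝ)) ω) := by
    filter_upwards [ae_vals μ x hmeas h0 h1 hm1 i] with ω hω
    rcases hω with h | h | h
    · have e1 : ω ∉ A1 := by simp [hA1def, h]
      have e2 : ω ∈ Am := by simp [hAmdef, h]
      have e3 : ω ∉ (A1 ∪ Am)ᶜ := by simp [e2]
      rw [Set.indicator_of_notMem e1, Set.indicator_of_mem e2, Set.indicator_of_notMem e3, h]
      push_cast
      ring_nf
    · have e1 : ω ∉ A1 := by simp [hA1def, h]
      have e2 : ω ∉ Am := by simp [hAmdef, h]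
      have e3 : ω ∈ (A1 ∪ Am)ᶜ := by simp [e1, e2]
      rw [Set.indicator_of_notMem e1, Set.indicator_of_notMem e2, Set.indicator_of_mem e3, h]
      norm_num
    · have e1 : ω ∈ A1 := by simp [hA1def, h]
      have e2 : ω ∉ Am := by simp [hAmdef, h]
      have e3 : ω ∉ (A1 ∪ Am)ᶜ := by simp [e1]
      rw [Set.indicator_of_mem e1, Set.indicator_of_notMem e2, Set.indicator_of_notMem e3, h]
      push_cast
      ring_nf
  have hint1 : Integrable (A1.indicator (fun _ => exp lam)) μ :=
    (integrable_const _).indicator hA1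
  have hint2 : Integrable (Am.indicator (fun _ => exp (-lam))) μ :=
    (integrable_const _).indicator hAm
  have hint3 : Integrable (((A1 ∪ Am)ᶜ).indicator (fun _ => (1:ℝ))) μ :=
    (integrable_const _).indicator ((hA1.union hAm).compl)
  have hμ1 : μ A1 = 1/4 := h1 i
  have hμm : μ Am = 1/4 := hm1 i
  have hμc : μ ((A1 ∪ Am)ᶜ) = 1/2 := by
    rw [measure_compl (hA1.union hAm) (measure_ne_top _ _), measure_union hdisj hAm, hμ1, hμm]
    rw [one_div, ennreal_quarter_add, measure_univ, ENNReal.one_sub_inv_two, one_div]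
  have hint12 : Integrable (fun ω => A1.indicator (fun _ => exp lam) ω
      + Am.indicator (fun _ => exp (-lam)) ω) μ := hint1.add hint2
  rw [mgf, integral_congr_ae hcongr, integral_add hint12 hint3,
    integral_add hint1 hint2, integral_indicator_const _ hA1, integral_indicator_const _ hAm,
    integral_indicator_const _ ((hA1.union hAm).compl), measureReal_def, measureReal_def,
    measureReal_def, hμ1, hμm, hμc]
  have htr : ((1:ℝ≥0∞)/4).toReal = 1/4 := by norm_num
  have htr2 : ((1:ℝ≥0∞)/2).toReal = 1/2 := by norm_num
  rw [htr, htr2]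
  have hc := Real.cosh_le_exp_half_sq lam
  have h1e : (1:ℝ) ≤ exp (lam^2/2) := Real.one_le_exp (by positivity)
  rw [Real.cosh_eq] at hc
  simp only [smul_eq_mul]
  nlinarith [Real.exp_pos lam, Real.exp_pos (-lam)]

end ChernoffPart




open MeasureTheory ProbabilityTheory Real
open scoped ENNReal

section TailPart

variable {Ω : Type*} [MeasurableSpace Ω] (μ : Measure Ω) [IsProbabilityMeasure μ]

/-- generic Chernoff tail bound for a finite sum of independent variables with
a common mgf bound -/
lemma tail_generic (W : ℕ → Ω → ℝ) (F : Finset ℕ) (lam t : ℝ) (hlam : 0 ≤ lam)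
    (hWmeas : ∀ i, Measurable (W i))
    (hWindep : iIndepFun W μ)
    (hWbdd : ∀ i, ∀ᵐ ω ∂μ, |W i ω| ≤ 1)
    (hWmgf : ∀ i, mgf (W i) μ lam ≤ exp (lam^2/2)) :
    μ {ω | t ≤ ∑ i ∈ F, W i ω}
      ≤ ENNReal.ofReal (exp (-lam * t) * exp (lam^2/2) ^ F.card) := by
  have hintS : Integrable (fun ω => exp (lam * ∑ i ∈ F, W i ω)) μ := by
    apply Integrable.mono' (integrable_const (exp (|lam| * F.card)))
    · exact ((Finset.measurable_sum F (fun i _ => hWmeas i)).const_mul lam).exp.aestronglyMeasurable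
    · have hball : ∀ᵐ ω ∂μ, ∀ i ∈ F, |W i ω| ≤ 1 :=
        (MeasureTheory.ae_ball_iff F.countable_toSet).2 (fun i _ => hWbdd i)
      filter_upwards [hball] with ω hω
      rw [Real.norm_eq_abs, Real.abs_exp]
      apply Real.exp_le_exp.2
      calc lam * ∑ i ∈ F, W i ω ≤ |lam * ∑ i ∈ F, W i ω| := le_abs_self _
        _ = |lam| * |∑ i ∈ F, W i ω| := abs_mul _ _
        _ ≤ |lam| * (F.card : ℝ) := by
            apply mul_le_mul_of_nonneg_left _ (abs_nonneg lam)
            calc |∑ i ∈ F, W i ω| ≤ ∑ i ∈ F, |W i ω| := Finset.abs_sum_le_sum_abs _ _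
              _ ≤ ∑ _i ∈ F, (1:ℝ) := Finset.sum_le_sum (fun i hi => hω i hi)
              _ = (F.card : ℝ) := by rw [Finset.sum_const, nsmul_eq_mul, mul_one]
  have hch := measure_ge_le_exp_mul_mgf (μ := μ) (X := fun ω => ∑ i ∈ F, W i ω)
    (t := lam) t hlam hintS
  have hfun : (fun ω => ∑ i ∈ F, W i ω) = ∑ i ∈ F, W i := by
    funext ω
    rw [Finset.sum_apply]
  have hmgfsum : mgf (fun ω => ∑ i ∈ F, W i ω) μ lam = ∏ i ∈ F, mgf (W i) μ lam := by
    rw [hfun]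
    exact hWindep.mgf_sum hWmeas F
  calc μ {ω | t ≤ ∑ i ∈ F, W i ω}
      = ENNReal.ofReal ((μ {ω | t ≤ ∑ i ∈ F, W i ω}).toReal) :=
        (ENNReal.ofReal_toReal (measure_ne_top _ _)).symm
    _ ≤ ENNReal.ofReal (exp (-lam * t) * exp (lam^2/2) ^ F.card) := by
        apply ENNReal.ofReal_le_ofReal
        refine le_trans hch ?_
        apply mul_le_mul_of_nonneg_left _ (Real.exp_pos _).le
        rw [hmgfsum]
        calc ∏ i ∈ F, mgf (W i) μ lam ≤ ∏ _i ∈ F, exp (lam^2/2) :=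
              Finset.prod_le_prod (fun i _ => mgf_nonneg) (fun i _ => hWmgf i)
          _ = exp (lam^2/2) ^ F.card := Finset.prod_const _

variable (x : ℕ → Ω → ℤ)
  (hmeas : ∀ i, Measurable (x i))
  (hindep : iIndepFun x μ)
  (h0 : ∀ i, μ {ω | x i ω = 0} = 1 / 2)
  (h1 : ∀ i, μ {ω | x i ω = 1} = 1 / 4)
  (hm1 : ∀ i, μ {ω | x i ω = -1} = 1 / 4)

include hmeas hindep h0 h1 hm1

/-- tail bound for an increment window of the walk -/
lemma tail_int (kk s : ℕ) (lam t : ℝ) (hlam : 0 ≤ lam) :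
    μ {ω | t < ((|∑ i ∈ Finset.range (kk+s), x i ω - ∑ i ∈ Finset.range kk, x i ω| : ℤ) : ℝ)}
      ≤ 2 * ENNReal.ofReal (exp (-lam * t) * exp (lam^2/2) ^ s) := by
  have hcast : Measurable (fun z : ℤ => (z : ℝ)) := fun _ _ => trivial
  have hcastneg : Measurable (fun z : ℤ => -(z : ℝ)) := fun _ _ => trivial
  set Y := fun (i : ℕ) (ω : Ω) => ((x i ω : ℤ) : ℝ) with hY
  set Z := fun (i : ℕ) (ω : Ω) => -((x i ω : ℤ) : ℝ) with hZ
  have hYmeas : ∀ i, Measurable (Y i) := fun i => hcast.comp (hmeas i)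
  have hZmeas : ∀ i, Measurable (Z i) := fun i => hcastneg.comp (hmeas i)
  have hYindep : iIndepFun Y μ :=
    hindep.comp (fun _ => fun z : ℤ => (z : ℝ)) (fun _ => hcast)
  have hZindep : iIndepFun Z μ :=
    hindep.comp (fun _ => fun z : ℤ => -(z : ℝ)) (fun _ => hcastneg)
  have hYbdd : ∀ i, ∀ᵐ ω ∂μ, |Y i ω| ≤ 1 := by
    intro i
    filter_upwards [ae_vals μ x hmeas h0 h1 hm1 i] with ω hω
    rcases hω with h | h | h <;>
      · show |((x i ω : ℤ) : ℝ)| ≤ 1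
        rw [h]
        norm_num
  have hZbdd : ∀ i, ∀ᵐ ω ∂μ, |Z i ω| ≤ 1 := by
    intro i
    filter_upwards [hYbdd i] with ω hω
    rw [hZ]
    rw [abs_neg]
    exact hω
  have hYmgf : ∀ i, mgf (Y i) μ lam ≤ exp (lam^2/2) :=
    fun i => mgf_single_le μ x hmeas h0 h1 hm1 i lam
  have hZmgf : ∀ i, mgf (Z i) μ lam ≤ exp (lam^2/2) := by
    intro i
    have hneg : Z i = -(Y i) := by
      funext ω
      simp [hY, hZ]
    rw [hneg, mgf_neg]
    have := mgf_single_le μ x hmeas h0 h1 hm1 i (-lam)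
    rw [neg_sq] at this
    exact this
  set F : Finset ℕ := Finset.Ico kk (kk+s) with hF
  have hFcard : F.card = s := by rw [hF, Nat.card_Ico]; omega
  have hsub : {ω | t < ((|∑ i ∈ Finset.range (kk+s), x i ω - ∑ i ∈ Finset.range kk, x i ω| : ℤ) : ℝ)}
      ⊆ {ω | t ≤ ∑ i ∈ F, Y i ω} ∪ {ω | t ≤ ∑ i ∈ F, Z i ω} := by
    intro ω hω
    rw [Set.mem_setOf_eq] at hω
    have hD : ∑ i ∈ F, Y i ω = ((∑ i ∈ Finset.range (kk+s), x i ω - ∑ i ∈ Finset.range kk, x i ω : ℤ) : ℝ) := by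
      rw [hF, ← Finset.sum_Ico_eq_sub (fun i => x i ω) (Nat.le_add_right kk s)]
      rw [hY]
      push_cast
      rfl
    have habs : ((|∑ i ∈ Finset.range (kk+s), x i ω - ∑ i ∈ Finset.range kk, x i ω| : ℤ) : ℝ)
        = |∑ i ∈ F, Y i ω| := by
      rw [hD]
      push_cast
      ring
    rw [habs] at hω
    rcases abs_cases (∑ i ∈ F, Y i ω) with ⟨heq, _⟩ | ⟨heq, _⟩
    · left
      rw [Set.mem_setOf_eq]
      rw [heq] at hω
      exact le_of_lt hω
    · right
      rw [Set.mem_setOf_eq]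
      have hZsum : ∑ i ∈ F, Z i ω = -∑ i ∈ F, Y i ω := by
        rw [hZ, hY, ← Finset.sum_neg_distrib]
      rw [hZsum]
      rw [heq] at hω
      exact le_of_lt hω
  calc μ {ω | t < ((|∑ i ∈ Finset.range (kk+s), x i ω - ∑ i ∈ Finset.range kk, x i ω| : ℤ) : ℝ)}
      ≤ μ ({ω | t ≤ ∑ i ∈ F, Y i ω} ∪ {ω | t ≤ ∑ i ∈ F, Z i ω}) := measure_mono hsub
    _ ≤ μ {ω | t ≤ ∑ i ∈ F, Y i ω} + μ {ω | t ≤ ∑ i ∈ F, Z i ω} := measure_union_le _ _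
    _ ≤ ENNReal.ofReal (exp (-lam * t) * exp (lam^2/2) ^ F.card)
        + ENNReal.ofReal (exp (-lam * t) * exp (lam^2/2) ^ F.card) :=
        add_le_add (tail_generic μ Y F lam t hlam hYmeas hYindep hYbdd hYmgf)
          (tail_generic μ Z F lam t hlam hZmeas hZindep hZbdd hZmgf)
    _ = 2 * ENNReal.ofReal (exp (-lam * t) * exp (lam^2/2) ^ s) := by
        rw [hFcard, two_mul]

end TailPart




open MeasureTheory ProbabilityTheory Real Filter Finset
open scoped ENNReal

lemma bound_tendsto {δ : ℝ} (hδ : 0 < δ) :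
    Tendsto (fun n : ℕ => ENNReal.ofReal (32*(n:ℝ)^3 * exp (-(n:ℝ)^(2*δ)/2)))
      atTop (nhds 0) := by
  rw [show (0:ℝ≥0∞) = ENNReal.ofReal 0 by simp]
  apply ENNReal.tendsto_ofReal
  have hmain : Tendsto (fun y : ℝ => 32 * (y ^ ((3:ℝ)/(2*δ)) * exp (-(1/2) * y)))
      atTop (nhds (32 * 0)) :=
    (tendsto_rpow_mul_exp_neg_mul_atTop_nhds_zero ((3:ℝ)/(2*δ)) (1/2) (by norm_num)).const_mul 32
  rw [mul_zero] at hmain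
  have hcomp : Tendsto (fun n : ℕ => (n:ℝ)^(2*δ)) atTop atTop :=
    (tendsto_rpow_atTop (by positivity)).comp tendsto_natCast_atTop_atTop
  apply Filter.Tendsto.congr' _ (hmain.comp hcomp)
  filter_upwards [Filter.eventually_ge_atTop 1] with n hn
  have hn0 : (0:ℝ) < n := by exact_mod_cast Nat.lt_of_lt_of_le Nat.zero_lt_one hn
  show 32 * (((n:ℝ)^(2*δ))^((3:ℝ)/(2*δ)) * exp (-(1/2) * (n:ℝ)^(2*δ)))
      = 32*(n:ℝ)^3 * exp (-(n:ℝ)^(2*δ)/2)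
  have h1 : ((n:ℝ)^(2*δ))^((3:ℝ)/(2*δ)) = (n:ℝ)^((3:ℝ)) := by
    rw [← Real.rpow_mul (le_of_lt hn0)]
    congr 1
    field_simp
  have h2 : (n:ℝ)^((3:ℝ)) = (n:ℝ)^(3:ℕ) := by
    rw [show ((3:ℝ)) = ((3:ℕ):ℝ) by norm_num, Real.rpow_natCast]
  rw [h1, h2]
  ring_nf

section Assembly

variable {Ω : Type*} [MeasurableSpace Ω] (μ : Measure Ω) [IsProbabilityMeasure μ]
  (x : ℕ → Ω → ℤ)
  (hmeas : ∀ i, Measurable (x i))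

include hmeas in
lemma Gset_measurable (n : ℕ) : MeasurableSet (Gset x n) := by
  have hsum : ∀ j : ℕ, Measurable (fun ω => ∑ i ∈ Finset.range j, x i ω) :=
    fun j => Finset.measurable_sum _ (fun i _ => hmeas i)
  have h2 : MeasurableSet {ω : Ω | ∑ i ∈ Finset.range n, x i ω = 0} :=
    (hsum n) (MeasurableSet.singleton 0)
  have h1 : MeasurableSet {ω : Ω | ∀ j, 0 < j → j < n → 0 < ∑ i ∈ Finset.range j, x i ω} := by
    have : {ω : Ω | ∀ j, 0 < j → j < n → 0 < ∑ i ∈ Finset.range j, x i ω}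
        = ⋂ j : ℕ, {ω : Ω | 0 < j → j < n → 0 < ∑ i ∈ Finset.range j, x i ω} := by
      ext ω
      simp [Set.mem_iInter]
    rw [this]
    apply MeasurableSet.iInter
    intro j
    by_cases hj : 0 < j ∧ j < n
    · have : {ω : Ω | 0 < j → j < n → 0 < ∑ i ∈ Finset.range j, x i ω}
          = (fun ω => ∑ i ∈ Finset.range j, x i ω) ⁻¹' {z : ℤ | 0 < z} := by
        ext ω
        simp [hj.1, hj.2, Set.mem_preimage]
      rw [this]
      exact (hsum j) trivial
    · have : {ω : Ω | 0 < j → j < n → 0 < ∑ i ∈ Finset.range j, x i ω} = Set.univ := by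
        ext ω
        simp only [Set.mem_setOf_eq, Set.mem_univ, iff_true]
        intro hj1 hj2
        exact absurd ⟨hj1, hj2⟩ hj
      rw [this]
      exact MeasurableSet.univ
  have hG : Gset x n = {ω : Ω | ∀ j, 0 < j → j < n → 0 < ∑ i ∈ Finset.range j, x i ω}
      ∩ {ω : Ω | ∑ i ∈ Finset.range n, x i ω = 0} := by
    ext ω
    simp [Gset, Set.mem_inter_iff, Set.mem_setOf_eq]
  rw [hG]
  exact h1.inter h2

variable (hindep : iIndepFun x μ)
  (h0 : ∀ i, μ {ω | x i ω = 0} = 1 / 2)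
  (h1 : ∀ i, μ {ω | x i ω = 1} = 1 / 4)
  (hm1 : ∀ i, μ {ω | x i ω = -1} = 1 / 4)

include hmeas hindep h0 h1 hm1

lemma main_bound {δ : ℝ} (hδ : 0 < δ) (k : ℕ → ℕ) {n : ℕ} (hn : 1 ≤ n) :
    (μ[|Gset x n]) {ω | ∃ s : ℕ, (s : ℝ) ≤ (n : ℝ) ^ ((2 : ℝ) / 3) ∧
        (n : ℝ) ^ ((1 : ℝ) / 3 + δ) <
          ((|∑ i ∈ Finset.range (k n + s), x i ω - ∑ i ∈ Finset.range (k n), x i ω| : ℤ) : ℝ)}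
      ≤ ENNReal.ofReal (32*(n:ℝ)^3 * exp (-(n:ℝ)^(2*δ)/2)) := by
  classical
  have hn0 : (0:ℝ) < n := by exact_mod_cast hn
  set lam : ℝ := (n:ℝ)^(δ-1/3) with hlamdef
  set t : ℝ := (n:ℝ)^((1:ℝ)/3+δ) with htdef
  have hlam0 : 0 ≤ lam := Real.rpow_nonneg (le_of_lt hn0) _
  have hlt : lam * t = (n:ℝ)^(2*δ) := by
    rw [hlamdef, htdef, ← Real.rpow_add hn0]
    congr 1
    ring
  have hlam2 : lam^2 = (n:ℝ)^(2*δ-2/3) := by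
    rw [hlamdef, ← Real.rpow_natCast ((n:ℝ)^(δ-1/3)) 2, ← Real.rpow_mul (le_of_lt hn0)]
    congr 1
    push_cast
    ring
  set m : ℕ := ⌊(n:ℝ)^((2:ℝ)/3)⌋₊ with hmdef
  have hmle : (m:ℝ) ≤ (n:ℝ)^((2:ℝ)/3) := Nat.floor_le (Real.rpow_nonneg (le_of_lt hn0) _)
  have hmn : m ≤ n := by
    have h23 : (n:ℝ)^((2:ℝ)/3) ≤ (n:ℝ) := by
      have := Real.rpow_le_rpow_of_exponent_le (show (1:ℝ) ≤ (n:ℝ) by exact_mod_cast hn)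
        (show (2:ℝ)/3 ≤ 1 by norm_num)
      rwa [Real.rpow_one] at this
    have : (m:ℝ) ≤ (n:ℝ) := le_trans hmle h23
    exact_mod_cast this
  -- the per-s exponential bound
  have hstep : ∀ s : ℕ, s ≤ m →
      exp (-lam * t) * exp (lam^2/2) ^ s ≤ exp (-(n:ℝ)^(2*δ)/2) := by
    intro s hs
    rw [← Real.exp_nat_mul, ← Real.exp_add]
    apply Real.exp_le_exp.2
    have hsle : (s:ℝ) ≤ (n:ℝ)^((2:ℝ)/3) := le_trans (by exact_mod_cast hs) hmle
    have hmul : (s:ℝ) * lam^2 ≤ (n:ℝ)^(2*δ) := by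
      calc (s:ℝ) * lam^2 ≤ (n:ℝ)^((2:ℝ)/3) * lam^2 :=
            mul_le_mul_of_nonneg_right hsle (sq_nonneg _)
        _ = (n:ℝ)^(2*δ) := by
            rw [hlam2, ← Real.rpow_add hn0]
            congr 1
            ring
    nlinarith [hlt]
  -- decompose the bad event
  set E : ℕ → Set Ω := fun s => {ω | t <
    ((|∑ i ∈ Finset.range (k n + s), x i ω - ∑ i ∈ Finset.range (k n), x i ω| : ℤ) : ℝ)} with hEdef
  have hBdecomp : {ω : Ω | ∃ s : ℕ, (s : ℝ) ≤ (n : ℝ) ^ ((2 : ℝ) / 3) ∧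
      (n : ℝ) ^ ((1 : ℝ) / 3 + δ) <
        ((|∑ i ∈ Finset.range (k n + s), x i ω - ∑ i ∈ Finset.range (k n), x i ω| : ℤ) : ℝ)}
      = ⋃ s ∈ Finset.range (m+1), E s := by
    ext ω
    simp only [Set.mem_setOf_eq, Set.mem_iUnion, Finset.mem_range, hEdef, htdef]
    constructor
    · rintro ⟨s, hs1, hs2⟩
      exact ⟨s, by
        have := Nat.le_floor hs1
        omega, hs2⟩
    · rintro ⟨s, hs1, hs2⟩
      refine ⟨s, ?_, hs2⟩
      have hsm : s ≤ m := by omega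
      exact le_trans (by exact_mod_cast hsm) hmle
  -- measure of the bad event
  have hBbound : μ (⋃ s ∈ Finset.range (m+1), E s)
      ≤ ((m:ℝ≥0∞)+1) * (2 * ENNReal.ofReal (exp (-(n:ℝ)^(2*δ)/2))) := by
    calc μ (⋃ s ∈ Finset.range (m+1), E s) ≤ ∑ s ∈ Finset.range (m+1), μ (E s) :=
          measure_biUnion_finset_le _ _
      _ ≤ ∑ _s ∈ Finset.range (m+1), (2 * ENNReal.ofReal (exp (-(n:ℝ)^(2*δ)/2))) := by
          apply Finset.sum_le_sum
          intro s hs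
          have htail := tail_int μ x hmeas hindep h0 h1 hm1 (k n) s lam t hlam0
          refine le_trans htail ?_
          apply mul_le_mul_right
          apply ENNReal.ofReal_le_ofReal
          exact hstep s (Nat.lt_succ_iff.1 (Finset.mem_range.1 hs))
      _ = ((m:ℝ≥0∞)+1) * (2 * ENNReal.ofReal (exp (-(n:ℝ)^(2*δ)/2))) := by
          rw [Finset.sum_const, Finset.card_range, nsmul_eq_mul]
          congr 1
          push_cast
          ring
  -- conditional probability bound
  have hGm := Gset_measurable x hmeas n
  have hGlow := G_lower μ x hmeas hindep h0 h1 hm1 (n := n) hn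
  have hinv : (μ (Gset x n))⁻¹ ≤ 8*(n:ℝ≥0∞)^2 := by
    have := ENNReal.inv_le_inv' hGlow
    rwa [inv_inv] at this
  rw [ProbabilityTheory.cond_apply hGm]
  calc (μ (Gset x n))⁻¹ * μ (Gset x n ∩ _) ≤ (8*(n:ℝ≥0∞)^2) * μ (⋃ s ∈ Finset.range (m+1), E s) := by
        rw [← hBdecomp]
        exact mul_le_mul' hinv (measure_mono Set.inter_subset_right)
    _ ≤ (8*(n:ℝ≥0∞)^2) * (((m:ℝ≥0∞)+1) * (2 * ENNReal.ofReal (exp (-(n:ℝ)^(2*δ)/2)))) :=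
        mul_le_mul_right hBbound _
    _ ≤ ENNReal.ofReal (32*(n:ℝ)^3 * exp (-(n:ℝ)^(2*δ)/2)) := by
        have hcast1 : (8:ℝ≥0∞)*(n:ℝ≥0∞)^2 = ENNReal.ofReal (8*(n:ℝ)^2) := by
          rw [ENNReal.ofReal_mul (by norm_num), ENNReal.ofReal_pow (by positivity),
            ENNReal.ofReal_natCast]
          norm_num
        have hcast2 : ((m:ℝ≥0∞)+1) = ENNReal.ofReal ((m:ℝ)+1) := by
          rw [ENNReal.ofReal_add (by positivity) (by norm_num), ENNReal.ofReal_natCast,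
            ENNReal.ofReal_one]
        have hcast3 : (2:ℝ≥0∞) * ENNReal.ofReal (exp (-(n:ℝ)^(2*δ)/2))
            = ENNReal.ofReal (2 * exp (-(n:ℝ)^(2*δ)/2)) := by
          rw [ENNReal.ofReal_mul (by norm_num)]
          norm_num
        rw [hcast1, hcast2, hcast3, ← ENNReal.ofReal_mul (by positivity),
          ← ENNReal.ofReal_mul (by positivity)]
        apply ENNReal.ofReal_le_ofReal
        have hm1n : (m:ℝ) + 1 ≤ 2*(n:ℝ) := by
          have : (m:ℝ) ≤ (n:ℝ) := by exact_mod_cast hmn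
          have hn1 : (1:ℝ) ≤ (n:ℝ) := by exact_mod_cast hn
          linarith
        have hkey := mul_le_mul_of_nonneg_right hm1n
          (show (0:ℝ) ≤ 16*(n:ℝ)^2 * exp (-(n:ℝ)^(2*δ)/2) by positivity)
        nlinarith [hkey]

end Assembly

end LazyAux


open MeasureTheory ProbabilityTheory Finset Filter

/-- Let `Y'` be the lazy walk with i.i.d. increments taking value `0` with probability
`1/2` and `±1` with probability `1/4` each, and let
`G_n = {Y'_k > 0 for 0 < k < n, Y'_n = 0}`.  Then for any fixed `δ > 0` and any choice of
times `1 ≤ k_n ≤ n`,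
`P( max_{0 ≤ s ≤ n^{2/3}} |Y'_{k_n + s} - Y'_{k_n}| > n^{1/3 + δ} | G_n ) → 0`
as `n → ∞`. -/
theorem lazy_walk_cond_fluctuation_tendsto_zero
    {Ω : Type*} [MeasurableSpace Ω] (μ : Measure Ω) [IsProbabilityMeasure μ]
    (x : ℕ → Ω → ℤ) (hmeas : ∀ i, Measurable (x i))
    (hindep : iIndepFun x μ)
    (h0 : ∀ i, μ {ω | x i ω = 0} = 1 / 2)
    (h1 : ∀ i, μ {ω | x i ω = 1} = 1 / 4)
    (hm1 : ∀ i, μ {ω | x i ω = -1} = 1 / 4)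
    (δ : ℝ) (hδ : 0 < δ) (k : ℕ → ℕ) (hk : ∀ n, 1 ≤ k n ∧ k n ≤ n) :
    Tendsto (fun n : ℕ =>
        (μ[|{ω | (∀ j, 0 < j → j < n → 0 < ∑ i ∈ range j, x i ω) ∧
            ∑ i ∈ range n, x i ω = 0}])
          {ω | ∃ s : ℕ, (s : ℝ) ≤ (n : ℝ) ^ ((2 : ℝ) / 3) ∧
            (n : ℝ) ^ ((1 : ℝ) / 3 + δ) <
              ((|∑ i ∈ range (k n + s), x i ω - ∑ i ∈ range (k n), x i ω| : ℤ) : ℝ)})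
      atTop (nhds 0) := by
  apply tendsto_of_tendsto_of_tendsto_of_le_of_le' tendsto_const_nhds
    (LazyAux.bound_tendsto hδ)
  · exact Filter.Eventually.of_forall (fun n => zero_le)
  · filter_upwards [Filter.eventually_ge_atTop 1] with n hn
    exact LazyAux.main_bound μ x hmeas hindep h0 h1 hm1 hδ k hn
end

section
/- Let C=(A,B,≺) be a two-chain cover with greedy pair of linear orders (λ,δ). If there exists 0<k<n with V(k)=W(k) for the associated walks (where V steps up at time i iff λ_i∈A and W steps up at time i iff δ_i∈A), then the first k elements of λ and the first k elements of δ coincide as sets. Consequently, if the poset defined by C has one factor (connected incomparability graph), the walks satisfy V(t)>W(t) for all 0<t<n. -/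
open scoped Classical

/-- A two-chain cover on `[n]`: a (strict) partial order on `Fin n` whose ground set is
partitioned into two chains, `A` and its complement `B = Aᶜ`. -/
structure TwoChainCover (n : ℕ) where
  lt : Fin n → Fin n → Prop
  irrefl : ∀ x, ¬lt x x
  trans : ∀ x y z, lt x y → lt y z → lt x z
  A : Finset (Fin n)
  chainA : ∀ x ∈ A, ∀ y ∈ A, x ≠ y → lt x y ∨ lt y x
  chainB : ∀ x y : Fin n, x ∉ A → y ∉ A → x ≠ y → lt x y ∨ lt y x

namespace TwoChainCover

variable {n : ℕ}

/-- The incomparability graph of a two-chain cover: `x ∼ y` iff `x ≠ y` and `x, y` are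
incomparable in the partial order. -/
def incompGraph (C : TwoChainCover n) : SimpleGraph (Fin n) where
  Adj x y := x ≠ y ∧ ¬C.lt x y ∧ ¬C.lt y x
  symm := ⟨fun x y h => ⟨h.1.symm, h.2.2, h.2.1⟩⟩
  loopless := ⟨fun x h => h.1 rfl⟩

/-- A two-chain cover has one factor if its incomparability graph is connected. -/
def OneFactor (C : TwoChainCover n) : Prop := C.incompGraph.Connected

/-- `(λ, δ)` is the greedy pair of linear orders of the cover `C`: both are linear
extensions of the partial order (here given as equivs `Fin n ≃ Fin n`, where `λ i` is the
element in position `i`, so that `λ.symm` records ranks), and every incomparable pair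
`a ∈ A`, `b ∈ B` is resolved as `a` before `b` in `λ` and `b` before `a` in `δ`. -/
def GreedyPair (C : TwoChainCover n) (lam del : Fin n ≃ Fin n) : Prop :=
  (∀ x y, C.lt x y → lam.symm x < lam.symm y) ∧
  (∀ x y, C.lt x y → del.symm x < del.symm y) ∧
  (∀ a ∈ C.A, ∀ b : Fin n, b ∉ C.A → ¬C.lt a b → ¬C.lt b a →
    lam.symm a < lam.symm b ∧ del.symm b < del.symm a)

/-- The walk associated with a linear order `e` (so `Γ(C) = (walk C λ, walk C δ)`): at
step `i + 1` the walk goes up if the element in position `i` lies in the chain `A`, and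
down otherwise. -/
def walk (C : TwoChainCover n) (e : Fin n ≃ Fin n) : ℕ → ℤ := fun t =>
  ∑ i ∈ Finset.univ.filter (fun i : Fin n => (i : ℕ) < t),
    (if e i ∈ C.A then (1 : ℤ) else -1)

/-- The incomparability window of `c`: the number of elements incomparable to `c`. -/
noncomputable def window (C : TwoChainCover n) (c : Fin n) : ℕ :=
  (Finset.univ.filter fun y : Fin n => y ≠ c ∧ ¬C.lt y c ∧ ¬C.lt c y).card

/-- `τ(c)`: the number of elements `y ⪯ c`. -/
noncomputable def tau (C : TwoChainCover n) (c : Fin n) : ℕ :=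
  (Finset.univ.filter fun y : Fin n => C.lt y c ∨ y = c).card

/-- The rank of `a` within the chain `A` (so `a = a_i` with `i = rankA C a`). -/
noncomputable def rankA (C : TwoChainCover n) (a : Fin n) : ℕ :=
  (Finset.univ.filter fun y : Fin n => y ∈ C.A ∧ C.lt y a).card + 1

/-- The rank of `b` within the chain `B = Aᶜ` (so `b = b_j` with `j = rankB C b`). -/
noncomputable def rankB (C : TwoChainCover n) (b : Fin n) : ℕ :=
  (Finset.univ.filter fun y : Fin n => y ∉ C.A ∧ C.lt y b).card + 1

/-- The first time the walk associated with `e` has taken `i` up-steps. -/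
noncomputable def tUp (C : TwoChainCover n) (e : Fin n ≃ Fin n) (i : ℕ) : ℕ :=
  sInf {t : ℕ | i ≤ (Finset.univ.filter fun j : Fin n => (j : ℕ) < t ∧ e j ∈ C.A).card}

/-- The first time the walk associated with `e` has taken `j` down-steps. -/
noncomputable def tDown (C : TwoChainCover n) (e : Fin n ≃ Fin n) (j : ℕ) : ℕ :=
  sInf {t : ℕ | j ≤ (Finset.univ.filter fun i : Fin n => (i : ℕ) < t ∧ e i ∉ C.A).card}

end TwoChainCover

section Helpers

open scoped Classical

lemma card_filter_comp' {n : ℕ} (e : Fin n ≃ Fin n) (p : Fin n → Prop) [DecidablePred p] :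
    (Finset.univ.filter fun i => p (e i)).card = (Finset.univ.filter p).card := by
  rw [← Finset.card_image_of_injective _ e.injective]
  congr 1
  ext y
  simp only [Finset.mem_image, Finset.mem_filter, Finset.mem_univ, true_and]
  constructor
  · rintro ⟨i, hi, rfl⟩; exact hi
  · intro hy; exact ⟨e.symm y, by simpa using hy, by simp⟩

lemma card_rank' {n : ℕ} (e : Fin n ≃ Fin n) (c : Fin n) :
    (Finset.univ.filter fun y : Fin n => e.symm y < c).card = (c : ℕ) := by
  rw [← card_filter_comp' e (fun y => e.symm y < c)]
  have h : (Finset.univ.filter fun i : Fin n => e.symm (e i) < c) = Finset.Iio c := by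
    ext i; simp [Finset.mem_Iio]
  rw [h, Fin.card_Iio]

lemma card_lt_nat' {n : ℕ} (t : ℕ) :
    (Finset.univ.filter fun i : Fin n => (i : ℕ) < t).card = min t n := by
  have h : (Finset.univ.filter fun i : Fin n => (i : ℕ) < t).image Fin.val
      = Finset.range (min t n) := by
    ext m
    simp only [Finset.mem_image, Finset.mem_filter, Finset.mem_univ, true_and,
      Finset.mem_range, Nat.lt_min]
    constructor
    · rintro ⟨i, hi, rfl⟩; exact ⟨hi, i.isLt⟩
    · rintro ⟨h1, h2⟩; exact ⟨⟨m, h2⟩, h1, rfl⟩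
  calc (Finset.univ.filter fun i : Fin n => (i : ℕ) < t).card
      = ((Finset.univ.filter fun i : Fin n => (i : ℕ) < t).image Fin.val).card :=
        (Finset.card_image_of_injective _ Fin.val_injective).symm
    _ = min t n := by rw [h, Finset.card_range]

lemma image_first' {n : ℕ} (e : Fin n ≃ Fin n) (k : ℕ) :
    (Finset.univ.filter fun i : Fin n => (i : ℕ) < k).image e
      = Finset.univ.filter fun x : Fin n => (e.symm x : ℕ) < k := by
  ext y
  simp only [Finset.mem_image, Finset.mem_filter, Finset.mem_univ, true_and]
  constructor
  · rintro ⟨i, hi, rfl⟩; simpa using hi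
  · intro hy; exact ⟨e.symm y, hy, by simp⟩

lemma cross_of_walk' {V : Type*} {G : SimpleGraph V} (S : Finset V) :
    ∀ {x y : V}, G.Walk x y → x ∈ S → y ∉ S → ∃ u v, u ∈ S ∧ v ∉ S ∧ G.Adj u v := by
  intro x y w
  induction w with
  | nil => intro hx hy; exact absurd hx hy
  | @cons x b y hab p ih =>
    intro hx hy
    by_cases hb : b ∈ S
    · exact ih hb hy
    · exact ⟨x, b, hx, hb, hab⟩

lemma walk_eq' {n : ℕ} (C : TwoChainCover n) (e : Fin n ≃ Fin n) (t : ℕ) :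
    C.walk e t = 2 * ((Finset.univ.filter fun i : Fin n => (i : ℕ) < t ∧ e i ∈ C.A).card : ℤ)
      - ((Finset.univ.filter fun i : Fin n => (i : ℕ) < t).card : ℤ) := by
  have hsplit := Finset.card_filter_add_card_filter_not
    (s := Finset.univ.filter fun i : Fin n => (i : ℕ) < t) (p := fun i => e i ∈ C.A)
  rw [Finset.filter_filter, Finset.filter_filter] at hsplit
  unfold TwoChainCover.walk
  rw [Finset.sum_ite, Finset.sum_const, Finset.sum_const, Finset.filter_filter,
    Finset.filter_filter]
  simp only [nsmul_eq_mul, mul_one, mul_neg_one]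
  omega

end Helpers

open TwoChainCover in
/-- Let `C = (A, B, ≺)` be a two-chain cover with greedy pair `(λ, δ)` and associated
walks `V = walk C λ`, `W = walk C δ`.  If `V k = W k` for some `0 < k < n`, then the sets
of the first `k` elements of `λ` and of `δ` coincide.  Consequently, if the poset defined
by `C` has one factor (connected incomparability graph), then `V t > W t` for all
`0 < t < n`. -/
theorem greedy_walks_nonhitting_of_oneFactor (n : ℕ) (C : TwoChainCover n)
    (lam del : Fin n ≃ Fin n) (hg : C.GreedyPair lam del) :
    (∀ k, 0 < k → k < n → C.walk lam k = C.walk del k →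
      (Finset.univ.filter fun i : Fin n => (i : ℕ) < k).image lam =
        (Finset.univ.filter fun i : Fin n => (i : ℕ) < k).image del) ∧
    (C.OneFactor → ∀ t, 0 < t → t < n → C.walk del t < C.walk lam t) := by
  classical
  obtain ⟨hl, hd, hgr⟩ := hg
  have key1 : ∀ a ∈ C.A, (lam.symm a : ℕ) ≤ (del.symm a : ℕ) := by
    intro a ha
    have hsub : (Finset.univ.filter fun y : Fin n => lam.symm y < lam.symm a)
        ⊆ (Finset.univ.filter fun y : Fin n => del.symm y < del.symm a) := by
      intro y hy
      simp only [Finset.mem_filter, Finset.mem_univ, true_and] at hy ⊢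
      by_cases hya : y = a
      · subst hya; exact absurd hy (lt_irrefl _)
      by_cases h1 : C.lt y a
      · exact hd y a h1
      by_cases h2 : C.lt a y
      · exact absurd (hl a y h2) (lt_asymm hy)
      by_cases hyA : y ∈ C.A
      · rcases C.chainA y hyA a ha hya with h | h
        · exact absurd h h1
        · exact absurd h h2
      · exact (hgr a ha y hyA h2 h1).2
    calc (lam.symm a : ℕ) = _ := (card_rank' lam (lam.symm a)).symm
      _ ≤ _ := Finset.card_le_card hsub
      _ = (del.symm a : ℕ) := card_rank' del (del.symm a)
  have key2 : ∀ b, b ∉ C.A → (del.symm b : ℕ) ≤ (lam.symm b : ℕ) := by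
    intro b hb
    have hsub : (Finset.univ.filter fun y : Fin n => del.symm y < del.symm b)
        ⊆ (Finset.univ.filter fun y : Fin n => lam.symm y < lam.symm b) := by
      intro y hy
      simp only [Finset.mem_filter, Finset.mem_univ, true_and] at hy ⊢
      by_cases hyb : y = b
      · subst hyb; exact absurd hy (lt_irrefl _)
      by_cases h1 : C.lt y b
      · exact hl y b h1
      by_cases h2 : C.lt b y
      · exact absurd (hd b y h2) (lt_asymm hy)
      by_cases hyA : y ∈ C.A
      · exact (hgr y hyA b hb h1 h2).1
      · rcases C.chainB y b hyA hb hyb with h | h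
        · exact absurd h h1
        · exact absurd h h2
    calc (del.symm b : ℕ) = _ := (card_rank' del (del.symm b)).symm
      _ ≤ _ := Finset.card_le_card hsub
      _ = (lam.symm b : ℕ) := card_rank' lam (lam.symm b)
  have huc : ∀ (e : Fin n ≃ Fin n) (t : ℕ),
      (Finset.univ.filter fun i : Fin n => (i : ℕ) < t ∧ e i ∈ C.A).card
        = (Finset.univ.filter fun x : Fin n => (e.symm x : ℕ) < t ∧ x ∈ C.A).card := by
    intro e t
    rw [← card_filter_comp' e (fun x => (e.symm x : ℕ) < t ∧ x ∈ C.A)]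
    congr 1; ext i; simp
  have tot : ∀ (e : Fin n ≃ Fin n) (t : ℕ),
      (Finset.univ.filter fun x : Fin n => (e.symm x : ℕ) < t).card = min t n := by
    intro e t
    rw [← card_filter_comp' e (fun x => (e.symm x : ℕ) < t)]
    have h : (Finset.univ.filter fun i : Fin n => ((e.symm (e i) : Fin n) : ℕ) < t)
        = Finset.univ.filter fun i : Fin n => (i : ℕ) < t := by
      ext i; simp
    rw [h, card_lt_nat']
  have hsplit : ∀ (e : Fin n ≃ Fin n) (t : ℕ),
      (Finset.univ.filter fun x : Fin n => (e.symm x : ℕ) < t ∧ x ∈ C.A).card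
        + (Finset.univ.filter fun x : Fin n => (e.symm x : ℕ) < t ∧ x ∉ C.A).card = min t n := by
    intro e t
    have h := Finset.card_filter_add_card_filter_not
      (s := Finset.univ.filter fun x : Fin n => (e.symm x : ℕ) < t) (p := fun x => x ∈ C.A)
    rw [Finset.filter_filter, Finset.filter_filter, tot e t] at h
    exact h
  have hAsub : ∀ t : ℕ,
      (Finset.univ.filter fun x : Fin n => (del.symm x : ℕ) < t ∧ x ∈ C.A)
        ⊆ Finset.univ.filter fun x : Fin n => (lam.symm x : ℕ) < t ∧ x ∈ C.A := by
    intro t x hx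
    simp only [Finset.mem_filter, Finset.mem_univ, true_and] at hx ⊢
    exact ⟨lt_of_le_of_lt (key1 x hx.2) hx.1, hx.2⟩
  have part1 : ∀ k, 0 < k → k < n → C.walk lam k = C.walk del k →
      (Finset.univ.filter fun i : Fin n => (i : ℕ) < k).image lam =
        (Finset.univ.filter fun i : Fin n => (i : ℕ) < k).image del := by
    intro k hk0 hkn hVW
    have h1 := walk_eq' C lam k
    have h2 := walk_eq' C del k
    rw [huc lam k] at h1
    rw [huc del k] at h2
    have hAcard : (Finset.univ.filter fun x : Fin n => (lam.symm x : ℕ) < k ∧ x ∈ C.A).card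
        = (Finset.univ.filter fun x : Fin n => (del.symm x : ℕ) < k ∧ x ∈ C.A).card := by
      rw [h1, h2] at hVW
      omega
    have hAeq := Finset.eq_of_subset_of_card_le (hAsub k) hAcard.le
    have hBsub : (Finset.univ.filter fun x : Fin n => (lam.symm x : ℕ) < k ∧ x ∉ C.A)
        ⊆ Finset.univ.filter fun x : Fin n => (del.symm x : ℕ) < k ∧ x ∉ C.A := by
      intro x hx
      simp only [Finset.mem_filter, Finset.mem_univ, true_and] at hx ⊢
      exact ⟨lt_of_le_of_lt (key2 x hx.2) hx.1, hx.2⟩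
    have hBcard : (Finset.univ.filter fun x : Fin n => (del.symm x : ℕ) < k ∧ x ∉ C.A).card
        = (Finset.univ.filter fun x : Fin n => (lam.symm x : ℕ) < k ∧ x ∉ C.A).card := by
      have hs1 := hsplit lam k
      have hs2 := hsplit del k
      omega
    have hBeq := Finset.eq_of_subset_of_card_le hBsub hBcard.le
    rw [image_first', image_first']
    ext x
    simp only [Finset.mem_filter, Finset.mem_univ, true_and]
    by_cases hx : x ∈ C.A
    · have h := Finset.ext_iff.mp hAeq x
      simp only [Finset.mem_filter, Finset.mem_univ, true_and] at h
      constructor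
      · intro hh; exact (h.mpr ⟨hh, hx⟩).1
      · intro hh; exact (h.mp ⟨hh, hx⟩).1
    · have h := Finset.ext_iff.mp hBeq x
      simp only [Finset.mem_filter, Finset.mem_univ, true_and] at h
      constructor
      · intro hh; exact (h.mp ⟨hh, hx⟩).1
      · intro hh; exact (h.mpr ⟨hh, hx⟩).1
  refine ⟨part1, ?_⟩
  intro hof t ht0 htn
  have h1 := walk_eq' C lam t
  have h2 := walk_eq' C del t
  rw [huc lam t] at h1
  rw [huc del t] at h2
  have hle : C.walk del t ≤ C.walk lam t := by
    have hc := Finset.card_le_card (hAsub t)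
    rw [h1, h2]
    omega
  rcases lt_or_eq_of_le hle with hlt | heq
  · exact hlt
  · exfalso
    have himg := part1 t ht0 htn heq.symm
    set S := (Finset.univ.filter fun i : Fin n => (i : ℕ) < t).image lam with hS
    have hSl : ∀ z, z ∈ S ↔ (lam.symm z : ℕ) < t := by
      intro z; rw [hS, image_first']; simp
    have hSd : ∀ z, z ∈ S ↔ (del.symm z : ℕ) < t := by
      intro z; rw [himg, image_first']; simp
    have hnpos : 0 < n := ht0.trans htn
    have hx : lam ⟨0, hnpos⟩ ∈ S := (hSl _).mpr (by simpa using ht0)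
    have hy : lam ⟨t, htn⟩ ∉ S := by simp [hSl]
    obtain ⟨w⟩ := hof.preconnected (lam ⟨0, hnpos⟩) (lam ⟨t, htn⟩)
    obtain ⟨u, v, hu, hv, hadj⟩ := cross_of_walk' S w hx hy
    obtain ⟨hne, h1', h2'⟩ := hadj
    by_cases huA : u ∈ C.A <;> by_cases hvA : v ∈ C.A
    · rcases C.chainA u huA v hvA hne with h | h
      · exact h1' h
      · exact h2' h
    · obtain ⟨-, hdlt⟩ := hgr u huA v hvA h1' h2'
      exact hv ((hSd v).mpr (lt_trans (Fin.lt_def.mp hdlt) ((hSd u).mp hu)))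
    · obtain ⟨hllt, -⟩ := hgr v hvA u huA h2' h1'
      exact hv ((hSl v).mpr (lt_trans (Fin.lt_def.mp hllt) ((hSl u).mp hu)))
    · rcases C.chainB u v huA hvA hne with h | h
      · exact h1' h
      · exact h2' h
end
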